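/- Let G = (V, E) be a finite DAG, let D be a chain decomposition of G, and let C be a chain of D. If a vertex v has two outgoing edges (v, t1) and (v, t2) with t1 ≠ t2, where both t1 and t2 lie on the chain C and t1 occurs earlier than t2 in C, then the edge (v, t2) is transitive. Consequently, for each vertex v and each chain C of D, at most one non-transitive outgoing edge of v has its target on C. -/
import Mathlib


variable {V : Type*}

/-- An edge `(v, t)` is transitive if there is a vertex `w` with an edge `(v, w)`
and `t` strictly reachable from `w`. -/
def IsTransEdge (E : V → V → Prop) (v t : V) : Prop :=
  E v t ∧ ∃ w, E v w ∧ Relation.TransGen E w t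

/-- A chain: a finite sequence of distinct vertices, each strictly reaching the next. -/
def IsChainList (E : V → V → Prop) (c : List V) : Prop :=
  c.Nodup ∧ c.Chain' (Relation.TransGen E)

/-- A chain decomposition: a finite family of chains, each vertex appearing on exactly one. -/
def IsChainDecomp (E : V → V → Prop) (D : Finset (List V)) : Prop :=
  (∀ c ∈ D, IsChainList E c) ∧ ∀ v : V, ∃! c, c ∈ D ∧ v ∈ c


lemma chain'_transGen_of_lt {E : V → V → Prop} {c : List V}
    (h : c.Chain' (Relation.TransGen E)) {i j : Fin c.length} (hij : i < j) :
    Relation.TransGen E (c.get i) (c.get j) := by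
  have hp : c.Pairwise (Relation.TransGen E) := List.isChain_iff_pairwise.mp h
  exact List.pairwise_iff_get.mp hp i j hij

theorem outgoing_nontransitive_edges [Fintype V] (E : V → V → Prop)
    (hdag : ∀ v : V, ¬ Relation.TransGen E v v)
    (D : Finset (List V)) (hD : IsChainDecomp E D)
    (C : List V) (hC : C ∈ D) :
    (∀ v t₁ t₂ : V, E v t₁ → E v t₂ → t₁ ≠ t₂ →
      (∃ i j : Fin C.length, i < j ∧ C.get i = t₁ ∧ C.get j = t₂) →
      IsTransEdge E v t₂) ∧
    (∀ v t₁ t₂ : V, E v t₁ → E v t₂ →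
      ¬ IsTransEdge E v t₁ → ¬ IsTransEdge E v t₂ →
      t₁ ∈ C → t₂ ∈ C → t₁ = t₂) := by
  obtain ⟨hchains, _⟩ := hD
  obtain ⟨_, hchain⟩ := hchains C hC
  constructor
  · rintro v t₁ t₂ h1 h2 hne ⟨i, j, hij, rfl, rfl⟩
    exact ⟨h2, C.get i, h1, chain'_transGen_of_lt hchain hij⟩
  · intro v t₁ t₂ h1 h2 hn1 hn2 hm1 hm2
    obtain ⟨i, rfl⟩ := List.mem_iff_get.mp hm1
    obtain ⟨j, rfl⟩ := List.mem_iff_get.mp hm2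
    by_contra hne
    rcases lt_or_gt_of_ne (fun h : i = j => hne (by rw [h])) with h | h
    · exact hn2 ⟨h2, C.get i, h1, chain'_transGen_of_lt hchain h⟩
    · exact hn1 ⟨h1, C.get j, h2, chain'_transGen_of_lt hchain h⟩
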